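/- Let S be the closed unit ball of a norm ‖·‖ on ℝ², let c₁, c₂ ∈ ℝ² with d := ‖c₁ − c₂‖ ≤ 2, and let D := {x ∈ ℝ² : ‖x − c₁‖ ≤ d and ‖x − c₂‖ ≤ d}. For any finite set P ⊆ D, the simple graph G on vertex set P in which distinct x, y ∈ P are adjacent if and only if ‖x − y‖ ≤ 2 (i.e., the intersection graph of the translates {p + S : p ∈ P}) is co-bipartite: its complement graph is bipartite. -/

import Mathlib

def cross (a b : ℝ × ℝ) : ℝ := a.1 * b.2 - a.2 * b.1

lemma exists_smul_of_cross_eq_zero {a b : ℝ × ℝ} (h : cross a b = 0) (ha : a ≠ 0) :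
    ∃ t : ℝ, b = t • a := by
  unfold cross at h
  by_cases h1 : a.1 = 0
  · have h2 : a.2 ≠ 0 := fun h2 => ha (Prod.ext h1 h2)
    have hb : b.1 = 0 := by
      rcases mul_eq_zero.mp (by rw [h1] at h; linarith : a.2 * b.1 = 0) with h' | h'
      · exact absurd h' h2
      · exact h'
    refine ⟨b.2 / a.2, Prod.ext ?_ ?_⟩
    · show b.1 = b.2 / a.2 * a.1
      rw [h1, hb]; ring
    · show b.2 = b.2 / a.2 * a.2
      field_simp
  · refine ⟨b.1 / a.1, Prod.ext ?_ ?_⟩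
    · show b.1 = b.1 / a.1 * a.1
      field_simp
    · show b.2 = b.1 / a.1 * a.2
      field_simp
      nlinarith [h]

lemma geom (p q w : ℝ × ℝ) (hA : 0 ≤ cross w p) (hB : 0 ≤ cross w q)
    (hC : 0 ≤ cross p q) (hAB : 0 < cross w p + cross w q) :
    (∃ t s : ℝ, 0 ≤ t ∧ t ≤ 1 ∧ 0 ≤ s ∧ s ≤ 1 ∧ t • p = q + s • (w - q)) ∨
    (∃ β γ : ℝ, 0 ≤ β ∧ 0 ≤ γ ∧ β + γ ≤ 1 ∧ p = β • q + γ • w) := by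
  by_cases hcase : cross w q ≤ cross w p + cross p q
  · have hpos : 0 < cross w p + cross p q := by
      by_contra h
      push_neg at h
      linarith
    refine Or.inl ⟨cross w q / (cross w p + cross p q),
      cross p q / (cross w p + cross p q), ?_, ?_, ?_, ?_, ?_⟩
    · exact div_nonneg hB hpos.le
    · rw [div_le_one hpos]; exact hcase
    · exact div_nonneg hC hpos.le
    · rw [div_le_one hpos]; linarith
    · refine Prod.ext ?_ ?_
      · show cross w q / (cross w p + cross p q) * p.1
          = q.1 + cross p q / (cross w p + cross p q) * (w.1 - q.1)
        field_simp
        simp only [cross]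
        ring
      · show cross w q / (cross w p + cross p q) * p.2
          = q.2 + cross p q / (cross w p + cross p q) * (w.2 - q.2)
        field_simp
        simp only [cross]
        ring
  · push_neg at hcase
    have hBpos : 0 < cross w q := by linarith
    refine Or.inr ⟨cross w p / cross w q, cross p q / cross w q, ?_, ?_, ?_, ?_⟩
    · exact div_nonneg hA hBpos.le
    · exact div_nonneg hC hBpos.le
    · rw [← add_div, div_le_one hBpos]; linarith
    · refine Prod.ext ?_ ?_
      · show p.1 = cross w p / cross w q * q.1 + cross p q / cross w q * w.1
        field_simp
        simp only [cross]
        ring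
      · show p.2 = cross w p / cross w q * q.2 + cross p q / cross w q * w.2
        field_simp
        simp only [cross]
        ring

lemma key_aux (nrm : (ℝ × ℝ) → ℝ)
    (h_add : ∀ x y : ℝ × ℝ, nrm (x + y) ≤ nrm x + nrm y)
    (h_smul : ∀ (a : ℝ) (x : ℝ × ℝ), nrm (a • x) = |a| * nrm x)
    (h_def : ∀ x : ℝ × ℝ, nrm x = 0 ↔ x = 0)
    (c₁ c₂ x y : ℝ × ℝ)
    (hx1 : nrm (x - c₁) ≤ nrm (c₁ - c₂)) (hx2 : nrm (x - c₂) ≤ nrm (c₁ - c₂))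
    (hy1 : nrm (y - c₁) ≤ nrm (c₁ - c₂)) (hy2 : nrm (y - c₂) ≤ nrm (c₁ - c₂))
    (hA : 0 ≤ cross (c₂ - c₁) (x - c₁)) (hB : 0 ≤ cross (c₂ - c₁) (y - c₁))
    (hC : 0 ≤ cross (x - c₁) (y - c₁)) :
    nrm (x - y) ≤ nrm (c₁ - c₂) := by
  have nrm0 : nrm 0 = 0 := (h_def 0).mpr rfl
  have nrm_neg : ∀ v, nrm (-v) = nrm v := by
    intro v
    rw [show -v = (-1 : ℝ) • v by module, h_smul]
    simp
  have nneg : ∀ v, 0 ≤ nrm v := by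
    intro v
    have h1 := h_add v (-v)
    rw [add_neg_cancel, nrm0, nrm_neg] at h1
    linarith
  have nsub : ∀ a b : ℝ × ℝ, nrm (a - b) = nrm (b - a) := by
    intro a b
    rw [show a - b = -(b - a) by abel, nrm_neg]
  have ntri : ∀ a b c : ℝ × ℝ, nrm (a - c) ≤ nrm (a - b) + nrm (b - c) := by
    intro a b c
    have := h_add (a - b) (b - c)
    rwa [sub_add_sub_cancel] at this
  rcases (nneg (c₁ - c₂)).lt_or_eq with hdpos | hd0
  swap
  · -- degenerate: d = 0
    have hx : x - c₁ = 0 := (h_def _).mp (le_antisymm (by linarith) (nneg _))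
    have hy : y - c₁ = 0 := (h_def _).mp (le_antisymm (by linarith) (nneg _))
    have hxy : x - y = 0 := by
      rw [show x - y = (x - c₁) - (y - c₁) by abel, hx, hy, sub_zero]
    rw [hxy, nrm0]
    exact nneg _
  · by_cases hcol : cross (c₂ - c₁) (x - c₁) = 0 ∧ cross (c₂ - c₁) (y - c₁) = 0
    · -- collinear case
      obtain ⟨hc1, hc2⟩ := hcol
      have hw : (c₂ - c₁) ≠ 0 := by
        intro h
        have h' : c₁ - c₂ = 0 := by rw [show c₁ - c₂ = -(c₂ - c₁) by abel, h, neg_zero]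
        rw [h', nrm0] at hdpos
        exact lt_irrefl _ hdpos
      obtain ⟨l, hl⟩ := exists_smul_of_cross_eq_zero hc1 hw
      obtain ⟨m, hm⟩ := exists_smul_of_cross_eq_zero hc2 hw
      have hwn : nrm (c₂ - c₁) = nrm (c₁ - c₂) := nsub _ _
      have habsl : |l| ≤ 1 := by
        have h1 : nrm (x - c₁) = |l| * nrm (c₁ - c₂) := by rw [hl, h_smul, hwn]
        nlinarith [hx1, h1]
      have habsl' : |l - 1| ≤ 1 := by
        have e : x - c₂ = (l - 1) • (c₂ - c₁) := by
          rw [show x - c₂ = (x - c₁) - (c₂ - c₁) by abel, hl]; module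
        have h1 : nrm (x - c₂) = |l - 1| * nrm (c₁ - c₂) := by rw [e, h_smul, hwn]
        nlinarith [hx2, h1]
      have habsm : |m| ≤ 1 := by
        have h1 : nrm (y - c₁) = |m| * nrm (c₁ - c₂) := by rw [hm, h_smul, hwn]
        nlinarith [hy1, h1]
      have habsm' : |m - 1| ≤ 1 := by
        have e : y - c₂ = (m - 1) • (c₂ - c₁) := by
          rw [show y - c₂ = (y - c₁) - (c₂ - c₁) by abel, hm]; module
        have h1 : nrm (y - c₂) = |m - 1| * nrm (c₁ - c₂) := by rw [e, h_smul, hwn]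
        nlinarith [hy2, h1]
      have hlm : |l - m| ≤ 1 := by
        rw [abs_le] at habsl habsl' habsm habsm' ⊢
        constructor <;> linarith
      have e : x - y = (l - m) • (c₂ - c₁) := by
        rw [show x - y = (x - c₁) - (y - c₁) by abel, hl, hm]; module
      rw [e, h_smul, hwn]
      nlinarith [abs_nonneg (l - m)]
    · have hAB : 0 < cross (c₂ - c₁) (x - c₁) + cross (c₂ - c₁) (y - c₁) := by
        rcases hA.lt_or_eq with h | h
        · linarith
        · rcases hB.lt_or_eq with h' | h'
          · linarith
          · exact absurd ⟨h.symm, h'.symm⟩ hcol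
      rcases geom (x - c₁) (y - c₁) (c₂ - c₁) hA hB hC hAB with
        ⟨t, s, ht0, ht1, hs0, hs1, hid⟩ | ⟨β, γ, hβ, hγ, hβγ, hid⟩
      · -- crossing case
        have hid' : t • (x - c₁) = (y - c₁) + s • (c₂ - y) := by
          rw [hid]; module
        set z := c₁ + t • (x - c₁) with hz
        have e1 : x - z = (1 - t) • (x - c₁) := by rw [hz]; module
        have e2 : z - y = s • (c₂ - y) := by rw [hz, hid']; module
        have e3 : c₁ - z = (-t) • (x - c₁) := by rw [hz]; module
        have e4 : z - c₂ = (s - 1) • (c₂ - y) := by rw [hz, hid']; module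
        have n1 : nrm (x - y) ≤ (1 - t) * nrm (x - c₁) + s * nrm (c₂ - y) :=
          calc nrm (x - y) ≤ nrm (x - z) + nrm (z - y) := ntri _ _ _
          _ = (1 - t) * nrm (x - c₁) + s * nrm (c₂ - y) := by
              rw [e1, e2, h_smul, h_smul, abs_of_nonneg (by linarith : (0:ℝ) ≤ 1 - t),
                abs_of_nonneg hs0]
        have n2 : nrm (c₁ - c₂) ≤ t * nrm (x - c₁) + (1 - s) * nrm (c₂ - y) :=
          calc nrm (c₁ - c₂) ≤ nrm (c₁ - z) + nrm (z - c₂) := ntri _ _ _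
          _ = t * nrm (x - c₁) + (1 - s) * nrm (c₂ - y) := by
              rw [e3, e4, h_smul, h_smul, abs_neg, abs_of_nonneg ht0,
                abs_of_nonpos (by linarith : s - 1 ≤ 0)]
              ring
        have hm2 : nrm (c₂ - y) ≤ nrm (c₁ - c₂) := by rw [nsub c₂ y]; exact hy2
        linarith [mul_nonneg ht0 (sub_nonneg.2 hx1),
          mul_nonneg (by linarith : (0:ℝ) ≤ 1 - s) (sub_nonneg.2 hm2),
          mul_nonneg (by linarith : (0:ℝ) ≤ 1 - t) (sub_nonneg.2 hx1),
          mul_nonneg hs0 (sub_nonneg.2 hm2)]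
      · -- triangle case
        have h5 : x - y = (1 - β - γ) • (c₁ - y) + γ • (c₂ - y) := by
          rw [show x - y = (x - c₁) - (y - c₁) by abel, hid]; module
        have n1 : nrm (x - y) ≤ (1 - β - γ) * nrm (c₁ - y) + γ * nrm (c₂ - y) := by
          rw [h5]
          calc nrm _ ≤ nrm ((1 - β - γ) • (c₁ - y)) + nrm (γ • (c₂ - y)) := h_add _ _
          _ = (1 - β - γ) * nrm (c₁ - y) + γ * nrm (c₂ - y) := by
              rw [h_smul, h_smul, abs_of_nonneg (by linarith : (0:ℝ) ≤ 1 - β - γ),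
                abs_of_nonneg hγ]
        have m1 : nrm (c₁ - y) ≤ nrm (c₁ - c₂) := by rw [nsub c₁ y]; exact hy1
        have m2 : nrm (c₂ - y) ≤ nrm (c₁ - c₂) := by rw [nsub c₂ y]; exact hy2
        linarith [mul_nonneg (by linarith : (0:ℝ) ≤ 1 - β - γ) (sub_nonneg.2 m1),
          mul_nonneg hγ (sub_nonneg.2 m2),
          mul_nonneg hβ hdpos.le]

lemma cross_swap (a b : ℝ × ℝ) : cross b a = -cross a b := by
  simp [cross]; ring

lemma cross_flip (c₁ c₂ v : ℝ × ℝ) :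
    cross (c₁ - c₂) (v - c₂) = -cross (c₂ - c₁) (v - c₁) := by
  simp [cross]; ring

lemma key (nrm : (ℝ × ℝ) → ℝ)
    (h_add : ∀ x y : ℝ × ℝ, nrm (x + y) ≤ nrm x + nrm y)
    (h_smul : ∀ (a : ℝ) (x : ℝ × ℝ), nrm (a • x) = |a| * nrm x)
    (h_def : ∀ x : ℝ × ℝ, nrm x = 0 ↔ x = 0)
    (c₁ c₂ x y : ℝ × ℝ)
    (hx1 : nrm (x - c₁) ≤ nrm (c₁ - c₂)) (hx2 : nrm (x - c₂) ≤ nrm (c₁ - c₂))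
    (hy1 : nrm (y - c₁) ≤ nrm (c₁ - c₂)) (hy2 : nrm (y - c₂) ≤ nrm (c₁ - c₂))
    (hA : 0 ≤ cross (c₂ - c₁) (x - c₁)) (hB : 0 ≤ cross (c₂ - c₁) (y - c₁)) :
    nrm (x - y) ≤ nrm (c₁ - c₂) := by
  by_cases hC : 0 ≤ cross (x - c₁) (y - c₁)
  · exact key_aux nrm h_add h_smul h_def c₁ c₂ x y hx1 hx2 hy1 hy2 hA hB hC
  · have hC' : 0 ≤ cross (y - c₁) (x - c₁) := by
      have h := cross_swap (x - c₁) (y - c₁)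
      push_neg at hC
      linarith
    have h := key_aux nrm h_add h_smul h_def c₁ c₂ y x hy1 hy2 hx1 hx2 hB hA hC'
    have hneg : nrm (x - y) = nrm (y - x) := by
      rw [show x - y = (-1 : ℝ) • (y - x) by module, h_smul]
      simp
    rw [hneg]
    exact h

/-- For a finite set of points `P` inside the lens `D` (with `d = ‖c₁ - c₂‖ ≤ 2`),
the graph on `P` joining distinct points at norm-distance at most `2` — i.e. the
intersection graph of the unit-ball translates centered at `P` — is co-bipartite:
its complement is bipartite (2-colorable). -/
theorem lens_intersection_graph_cobipartite
    (nrm : (ℝ × ℝ) → ℝ)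
    (h_add : ∀ x y : ℝ × ℝ, nrm (x + y) ≤ nrm x + nrm y)
    (h_smul : ∀ (a : ℝ) (x : ℝ × ℝ), nrm (a • x) = |a| * nrm x)
    (h_def : ∀ x : ℝ × ℝ, nrm x = 0 ↔ x = 0)
    (c₁ c₂ : ℝ × ℝ) (d : ℝ) (hd : d = nrm (c₁ - c₂)) (hd2 : d ≤ 2)
    (D : Set (ℝ × ℝ))
    (hD : D = {x | nrm (x - c₁) ≤ d ∧ nrm (x - c₂) ≤ d})
    (P : Finset (ℝ × ℝ)) (hP : ∀ p ∈ P, p ∈ D)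
    (G : SimpleGraph {x // x ∈ P})
    (hG : ∀ x y : {x // x ∈ P},
      G.Adj x y ↔ x ≠ y ∧ nrm ((x : ℝ × ℝ) - (y : ℝ × ℝ)) ≤ 2) :
    Gᶜ.Colorable 2 := by
  subst hD
  subst hd
  have hmem : ∀ v : {x // x ∈ P},
      nrm ((v : ℝ × ℝ) - c₁) ≤ nrm (c₁ - c₂) ∧ nrm ((v : ℝ × ℝ) - c₂) ≤ nrm (c₁ - c₂) :=
    fun v => hP v.1 v.2
  have hsw : nrm (c₂ - c₁) = nrm (c₁ - c₂) := by
    rw [show c₂ - c₁ = (-1 : ℝ) • (c₁ - c₂) by module, h_smul]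
    simp
  refine ⟨SimpleGraph.Coloring.mk
    (fun v => if 0 ≤ cross (c₂ - c₁) ((v : ℝ × ℝ) - c₁) then 0 else 1) ?_⟩
  intro a b hab
  rw [SimpleGraph.compl_adj] at hab
  obtain ⟨hne, hnadj⟩ := hab
  intro hcoleq
  apply hnadj
  rw [hG]
  refine ⟨hne, ?_⟩
  by_cases h1 : 0 ≤ cross (c₂ - c₁) ((a : ℝ × ℝ) - c₁) <;>
    by_cases h2 : 0 ≤ cross (c₂ - c₁) ((b : ℝ × ℝ) - c₁)
  · exact le_trans (key nrm h_add h_smul h_def c₁ c₂ a b (hmem a).1 (hmem a).2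
      (hmem b).1 (hmem b).2 h1 h2) hd2
  · simp [h1, h2] at hcoleq
  · simp [h1, h2] at hcoleq
  · have h1' : 0 ≤ cross (c₁ - c₂) ((a : ℝ × ℝ) - c₂) := by
      rw [cross_flip]
      push_neg at h1
      linarith
    have h2' : 0 ≤ cross (c₁ - c₂) ((b : ℝ × ℝ) - c₂) := by
      rw [cross_flip]
      push_neg at h2
      linarith
    have h := key nrm h_add h_smul h_def c₂ c₁ a b
      (by rw [hsw]; exact (hmem a).2) (by rw [hsw]; exact (hmem a).1)
      (by rw [hsw]; exact (hmem b).2) (by rw [hsw]; exact (hmem b).1) h1' h2'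
    rw [hsw] at h
    exact le_trans h hd2
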